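/- Let A and B be groups. The restricted wreath product A ≀ B is finitely generated if and only if both A and B are finitely generated. -/

import Mathlib

/-- The subgroup of `B → A` consisting of finitely supported functions. -/
def FinMulSupp (A B : Type*) [Group A] : Subgroup (B → A) where
  carrier := {f | (Function.mulSupport f).Finite}
  one_mem' := by simp [Function.mulSupport_one]
  mul_mem' := fun {f g} hf hg =>
    Set.Finite.subset (hf.union hg) (Function.mulSupport_mul f g)
  inv_mem' := fun {f} hf => by simpa [Function.mulSupport_inv] using hf

/-- The shift action of `B` on finitely supported functions `B → A`, by permuting the
coordinates according to left multiplication. -/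
def shiftHom (A B : Type*) [Group A] [Group B] : B →* MulAut ↥(FinMulSupp A B) where
  toFun b :=
    { toFun := fun f => ⟨fun x => f.1 (b⁻¹ * x), by
        refine (f.2.image (fun y => b * y)).subset ?_
        intro x hx
        exact ⟨b⁻¹ * x, hx, by simp⟩⟩
      invFun := fun f => ⟨fun x => f.1 (b * x), by
        refine (f.2.image (fun y => b⁻¹ * y)).subset ?_
        intro x hx
        exact ⟨b * x, hx, by simp⟩⟩
      left_inv := fun f => Subtype.ext (funext fun x => by
        simp [inv_mul_cancel_left])
      right_inv := fun f => Subtype.ext (funext fun x => by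
        simp [mul_inv_cancel_left])
      map_mul' := fun f g => Subtype.ext rfl }
  map_one' := by
    refine MulEquiv.ext fun f => Subtype.ext (funext fun x => ?_)
    simp
  map_mul' := fun b₁ b₂ => by
    refine MulEquiv.ext fun f => Subtype.ext (funext fun x => ?_)
    simp [mul_assoc]

/-- The restricted wreath product `A ≀ B := (⊕_B A) ⋊ B`. -/
abbrev Wreath (A B : Type*) [Group A] [Group B] :=
  FinMulSupp A B ⋊[shiftHom A B] B

namespace WreathAux

open Subgroup Function SemidirectProduct

variable {A B : Type*} [Group A] [Group B]

open Classical in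
/-- The delta function at `x` with value `a`, as an element of `FinMulSupp A B`. -/
noncomputable def delta (x : B) (a : A) : FinMulSupp A B :=
  ⟨Pi.mulSingle x a, (Set.finite_singleton x).subset Pi.mulSupport_mulSingle_subset⟩

open Classical in
lemma delta_apply (x : B) (a : A) (y : B) :
    (delta x a : FinMulSupp A B).1 y = if y = x then a else 1 := by
  classical
  simp [delta, Pi.mulSingle_apply]

lemma shift_delta (b x : B) (a : A) :
    shiftHom A B b (delta x a) = delta (b * x) a := by
  refine Subtype.ext (funext fun y => ?_)
  show (delta x a : FinMulSupp A B).1 (b⁻¹ * y) = _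
  rw [delta_apply, delta_apply]
  congr 1
  simp only [eq_iff_iff]
  constructor
  · rintro h; rw [← mul_inv_cancel_left b y, h]
  · rintro rfl; simp

lemma delta_mul (x : B) (a a' : A) :
    delta x (a * a') = delta x a * delta x a' := by
  refine Subtype.ext (funext fun y => ?_)
  show _ = (delta x a : FinMulSupp A B).1 y * (delta x a' : FinMulSupp A B).1 y
  simp only [delta_apply]
  by_cases h : y = x <;> simp [h]

/-- `a ↦ inl (delta 1 a)` as a homomorphism `A →* Wreath A B`. -/
noncomputable def deltaHom : A →* Wreath A B where
  toFun a := SemidirectProduct.inl (delta (1 : B) a)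
  map_one' := by
    show SemidirectProduct.inl (delta (1 : B) (1 : A)) = 1
    have : delta (1 : B) (1 : A) = 1 := by
      refine Subtype.ext (funext fun y => ?_)
      simp [delta_apply]
    rw [this, map_one]
  map_mul' a a' := by
    show SemidirectProduct.inl (delta (1 : B) (a * a')) =
      SemidirectProduct.inl (delta (1 : B) a) * SemidirectProduct.inl (delta (1 : B) a')
    rw [delta_mul, map_mul]

/-- If a subgroup of the wreath product contains all deltas, it contains all of `inl`. -/
lemma inl_mem_of_delta_mem (K : Subgroup (Wreath A B))
    (h : ∀ x a, SemidirectProduct.inl (delta x a) ∈ K) (f : FinMulSupp A B) :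
    SemidirectProduct.inl f ∈ K := by
  classical
  suffices H : ∀ s : Finset B, ∀ f : FinMulSupp A B,
      Function.mulSupport f.1 ⊆ ↑s → SemidirectProduct.inl f ∈ K by
    exact H f.2.toFinset f (by intro x hx; exact Finset.mem_coe.mpr ((Set.Finite.mem_toFinset _).mpr hx))
  intro s
  induction s using Finset.induction_on with
  | empty =>
    intro f hf
    have : f = 1 := by
      refine Subtype.ext (funext fun y => ?_)
      by_contra hy
      simpa using hf hy
    rw [this, map_one]; exact K.one_mem
  | @insert x s hx ih =>
    intro f hf
    set g : B → A := Function.update f.1 x 1 with hg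
    have hgsup : Function.mulSupport g ⊆ ↑s := by
      intro y hy
      have hyx : y ≠ x := by
        rintro rfl
        simp [hg, Function.mulSupport, Function.update_self] at hy
      have : g y = f.1 y := Function.update_of_ne hyx _ _
      have := hf (show y ∈ Function.mulSupport f.1 by
        simpa [Function.mulSupport, this] using hy)
      simpa [hyx] using this
    have hgfin : (Function.mulSupport g).Finite := s.finite_toSet.subset hgsup
    have hsplit : f = delta x (f.1 x) * ⟨g, hgfin⟩ := by
      refine Subtype.ext (funext fun y => ?_)
      show f.1 y = (delta x (f.1 x) : FinMulSupp A B).1 y * g y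
      rw [delta_apply]
      by_cases hyx : y = x
      · subst hyx; simp [hg, Function.update_self]
      · simp [hyx, hg, Function.update_of_ne hyx]
    rw [hsplit, map_mul]
    exact K.mul_mem (h x (f.1 x)) (ih ⟨g, hgfin⟩ hgsup)

end WreathAux

theorem wreath_fg_iff (A B : Type*) [Group A] [Group B] :
    Group.FG (Wreath A B) ↔ Group.FG A ∧ Group.FG B := by
  classical
  constructor
  · intro h
    haveI := h
    refine ⟨?_, Group.fg_of_surjective (f := (SemidirectProduct.rightHom :
      Wreath A B →* B)) SemidirectProduct.rightHom_surjective⟩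
    -- A is finitely generated
    obtain ⟨S, hS, hSfin⟩ := Group.fg_iff.mp h
    set T : Set A := ⋃ w ∈ S, Set.range (w.left.1 : B → A) with hT
    have hrange : ∀ w : Wreath A B, (Set.range (w.left.1 : B → A)).Finite := by
      intro w
      refine Set.Finite.subset ((w.left.2.image w.left.1).union (Set.finite_singleton 1)) ?_
      rintro _ ⟨x, rfl⟩
      by_cases hx : w.left.1 x = 1
      · simp [hx]
      · exact Or.inl ⟨x, hx, rfl⟩
    have hTfin : T.Finite := hSfin.biUnion fun w _ => hrange w
    set K : Subgroup (Wreath A B) :=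
      { carrier := {w | ∀ x : B, w.left.1 x ∈ Subgroup.closure T}
        one_mem' := fun x => by
          show ((1 : Wreath A B).left.1) x ∈ _
          simp only [SemidirectProduct.one_left]
          exact Subgroup.one_mem _
        mul_mem' := by
          intro w w' hw hw' x
          show ((w * w').left.1) x ∈ _
          rw [SemidirectProduct.mul_left]
          exact Subgroup.mul_mem _ (hw x) (hw' _)
        inv_mem' := by
          intro w hw x
          show ((w⁻¹).left.1) x ∈ _
          rw [SemidirectProduct.inv_left]
          exact Subgroup.inv_mem _ (hw _) } with hK
    have hSK : Subgroup.closure S ≤ K := by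
      rw [Subgroup.closure_le]
      intro w hw x
      refine Subgroup.subset_closure ?_
      exact Set.mem_biUnion hw ⟨x, rfl⟩
    refine ⟨⟨hTfin.toFinset, ?_⟩⟩
    rw [Set.Finite.coe_toFinset]
    rw [eq_top_iff]
    intro a _
    have hmem : (SemidirectProduct.inl (WreathAux.delta (1 : B) a) : Wreath A B) ∈ K :=
      hSK (hS ▸ Subgroup.mem_top _)
    have := hmem (1 : B)
    simpa [SemidirectProduct.left_inl, WreathAux.delta_apply] using this
  · rintro ⟨hA, hB⟩
    obtain ⟨SA, hSA, hSAfin⟩ := Group.fg_iff.mp hA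
    obtain ⟨SB, hSB, hSBfin⟩ := Group.fg_iff.mp hB
    set S : Set (Wreath A B) :=
      (fun a => SemidirectProduct.inl (WreathAux.delta (1 : B) a)) '' SA ∪
        (SemidirectProduct.inr : B →* Wreath A B) '' SB with hSdef
    have hSfin : S.Finite := (hSAfin.image _).union (hSBfin.image _)
    refine Group.fg_iff.mpr ⟨S, ?_, hSfin⟩
    have hinr : ∀ b : B, (SemidirectProduct.inr b : Wreath A B) ∈ Subgroup.closure S := by
      intro b
      have hb : (SemidirectProduct.inr b : Wreath A B) ∈
          (Subgroup.closure SB).map (SemidirectProduct.inr : B →* Wreath A B) :=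
        ⟨b, hSB ▸ Subgroup.mem_top _, rfl⟩
      rw [MonoidHom.map_closure] at hb
      exact Subgroup.closure_mono Set.subset_union_right hb
    have hinl1 : ∀ a : A,
        (SemidirectProduct.inl (WreathAux.delta (1 : B) a) : Wreath A B) ∈
          Subgroup.closure S := by
      intro a
      have ha : (WreathAux.deltaHom a : Wreath A B) ∈
          (Subgroup.closure SA).map (WreathAux.deltaHom : A →* Wreath A B) :=
        ⟨a, hSA ▸ Subgroup.mem_top _, rfl⟩
      rw [MonoidHom.map_closure] at ha
      refine Subgroup.closure_mono ?_ ha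
      intro w hw
      exact Or.inl hw
    have hdelta : ∀ (x : B) (a : A),
        (SemidirectProduct.inl (WreathAux.delta x a) : Wreath A B) ∈
          Subgroup.closure S := by
      intro x a
      have hx : WreathAux.delta x a = shiftHom A B x (WreathAux.delta (1 : B) a) := by
        rw [WreathAux.shift_delta, mul_one]
      rw [hx, SemidirectProduct.inl_aut, map_inv]
      exact Subgroup.mul_mem _ (Subgroup.mul_mem _ (hinr x) (hinl1 a))
        (Subgroup.inv_mem _ (hinr x))
    rw [eq_top_iff]
    intro w _
    rw [← SemidirectProduct.inl_left_mul_inr_right w]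
    exact Subgroup.mul_mem _
      (WreathAux.inl_mem_of_delta_mem (Subgroup.closure S) hdelta w.left)
      (hinr w.right)
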